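/- Let H : E → ℝ be smooth and let ζ₁, …, ζ_m be smooth vector fields on E with L_{ζᵢ} α_H = 0 for i = 1, …, m; set Jᵢ(x) = α_H(x)(ζᵢ(x)). Fix x ∈ E. If the vectors Z_H(x), ζ₁(x), …, ζ_m(x) are linearly independent in E, then the differentials dJ₁(x), …, dJ_m(x) are linearly independent in the dual of E. -/

import Mathlib

noncomputable section
open scoped ContDiff

/-- The extended phase space `E = ℝ × ℝⁿ × ℝⁿ`, with points `x = (t, q, p)`. -/
abbrev EE (n : ℕ) : Type := ℝ × (Fin n → ℝ) × (Fin n → ℝ)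

/-- The Poincaré–Cartan 1-form `α_H = p dq − H dt`:
`α_H(x)(τ̂, ξ̂, η̂) = ∑ i, pᵢ ξ̂ᵢ − H(x) τ̂`. -/
def pcForm {n : ℕ} (H : EE n → ℝ) (x : EE n) : EE n →L[ℝ] ℝ :=
  (∑ i, x.2.2 i • ((ContinuousLinearMap.proj i).comp
      ((ContinuousLinearMap.fst ℝ (Fin n → ℝ) (Fin n → ℝ)).comp
        (ContinuousLinearMap.snd ℝ ℝ ((Fin n → ℝ) × (Fin n → ℝ))))))
    - H x • ContinuousLinearMap.fst ℝ ℝ ((Fin n → ℝ) × (Fin n → ℝ))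

/-- The vector field `Z_H(x) = (1, ∂H/∂p(x), −∂H/∂q(x))` of Hamilton's equations. -/
def ZH {n : ℕ} (H : EE n → ℝ) (x : EE n) : EE n :=
  (1, fun i => fderiv ℝ H x (0, 0, Pi.single i 1),
      fun i => - fderiv ℝ H x (0, Pi.single i 1, 0))

/-- The Lie derivative of a 1-form `α` along a vector field `ζ`:
`(L_ζ α)(x)(v) = (Dα(x)(ζ(x)))(v) + α(x)(Dζ(x)(v))`. -/
def lieDeriv {n : ℕ} (ζ : EE n → EE n) (α : EE n → (EE n →L[ℝ] ℝ)) (x : EE n) :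
    EE n →L[ℝ] ℝ :=
  fderiv ℝ α x (ζ x) + (α x).comp (fderiv ℝ ζ x)

/-- The exterior derivative of a 1-form:
`dα(x)(u,v) = (Dα(x)u)(v) − (Dα(x)v)(u)`. -/
def extDeriv1Form {n : ℕ} (α : EE n → (EE n →L[ℝ] ℝ)) (x u v : EE n) : ℝ :=
  fderiv ℝ α x u v - fderiv ℝ α x v u

namespace Noether15

variable {n : ℕ}

/-- Projection onto the `i`-th `q` coordinate. -/
def Lq (i : Fin n) : EE n →L[ℝ] ℝ :=
  (ContinuousLinearMap.proj i).comp
    ((ContinuousLinearMap.fst ℝ (Fin n → ℝ) (Fin n → ℝ)).comp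
      (ContinuousLinearMap.snd ℝ ℝ ((Fin n → ℝ) × (Fin n → ℝ))))

/-- Projection onto the `i`-th `p` coordinate. -/
def Lp (i : Fin n) : EE n →L[ℝ] ℝ :=
  (ContinuousLinearMap.proj i).comp
    ((ContinuousLinearMap.snd ℝ (Fin n → ℝ) (Fin n → ℝ)).comp
      (ContinuousLinearMap.snd ℝ ℝ ((Fin n → ℝ) × (Fin n → ℝ))))

/-- Projection onto the `t` coordinate. -/
def Lt : EE n →L[ℝ] ℝ := ContinuousLinearMap.fst ℝ ℝ ((Fin n → ℝ) × (Fin n → ℝ))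

/-- The linear part of the Poincaré–Cartan form. -/
def A : EE n →L[ℝ] (EE n →L[ℝ] ℝ) := ∑ i, (Lp i).smulRight (Lq i)

/-- The derivative of the Poincaré–Cartan form at `x`. -/
def Dform (H : EE n → ℝ) (x : EE n) : EE n →L[ℝ] (EE n →L[ℝ] ℝ) :=
  A - (fderiv ℝ H x).smulRight Lt

lemma Dform_apply (H : EE n → ℝ) (x u v : EE n) :
    Noether15.Dform H x u v = (∑ i, u.2.2 i * v.2.1 i) - fderiv ℝ H x u * v.1 := by
  simp [Dform, A, Lp, Lq, Lt, ContinuousLinearMap.sum_apply, smul_eq_mul]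

lemma pcForm_eq (H : EE n → ℝ) : pcForm H = fun y => A y - H y • (Lt (n := n)) := by
  funext y
  refine ContinuousLinearMap.ext fun v => ?_
  simp [pcForm, A, Lp, Lq, Lt, ContinuousLinearMap.sum_apply, smul_eq_mul]

lemma pcForm_apply (H : EE n → ℝ) (y v : EE n) :
    pcForm H y v = (∑ i, y.2.2 i * v.2.1 i) - H y * v.1 := by
  rw [pcForm_eq]
  simp [A, Lp, Lq, Lt, ContinuousLinearMap.sum_apply, smul_eq_mul]

lemma hasFDerivAt_pcForm (H : EE n → ℝ) (hH : ContDiff ℝ ∞ H) (x : EE n) :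
    HasFDerivAt (pcForm H) (Noether15.Dform H x) x := by
  rw [pcForm_eq]
  have h1 : HasFDerivAt (fun y : EE n => H y • (Lt (n := n)))
      ((fderiv ℝ H x).smulRight Lt) x := by
    have := ((hH.differentiable (by simp) x).hasFDerivAt).smul
      (hasFDerivAt_const (Lt (n := n)) x)
    rw [smul_zero, zero_add] at this
    exact this
  exact (A (n := n)).hasFDerivAt.sub h1

end Noether15

/-- if `ζ₁, …, ζ_m` are Noether symmetries with Noether integrals
`Jᵢ = α_H(ζᵢ)`, and at a point `x` the vectors `Z_H(x), ζ₁(x), …, ζ_m(x)` are linearly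
independent, then the differentials `dJ₁(x), …, dJ_m(x)` are linearly independent. -/
theorem differentials_of_noether_integrals_independent {n m : ℕ} (hn : 1 ≤ n)
    (H : EE n → ℝ) (hH : ContDiff ℝ ∞ H)
    (ζ : Fin m → (EE n → EE n)) (hζ : ∀ i, ContDiff ℝ ∞ (ζ i))
    (hsym : ∀ i, ∀ x, lieDeriv (ζ i) (pcForm H) x = 0)
    (x : EE n)
    (hindep : LinearIndependent ℝ (Fin.cons (ZH H x) (fun i => ζ i x) :
      Fin (m + 1) → EE n)) :
    LinearIndependent ℝ (fun i : Fin m => fderiv ℝ (fun y => pcForm H y (ζ i y)) x) := by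
  have hpc := Noether15.hasFDerivAt_pcForm H hH x
  have hpcf : fderiv ℝ (pcForm H) x = Noether15.Dform H x := hpc.fderiv
  -- derivative of each Noether integral
  have hJ : ∀ i, fderiv ℝ (fun y => pcForm H y (ζ i y)) x
      = (pcForm H x).comp (fderiv ℝ (ζ i) x) + (Noether15.Dform H x).flip (ζ i x) := fun i =>
    (hpc.clm_apply ((hζ i).differentiable (by simp) x).hasFDerivAt).fderiv
  -- the symmetry condition
  have hsym' : ∀ i, (pcForm H x).comp (fderiv ℝ (ζ i) x) = - (Noether15.Dform H x) (ζ i x) := by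
    intro i
    have h := hsym i x
    rw [lieDeriv, hpcf] at h
    exact eq_neg_of_add_eq_zero_right h
  -- hence `dJᵢ(x)(v) = Dform(v)(ζᵢ(x)) − Dform(ζᵢ(x))(v)`
  have hJ' : ∀ i v, fderiv ℝ (fun y => pcForm H y (ζ i y)) x v
      = Noether15.Dform H x v (ζ i x) - Noether15.Dform H x (ζ i x) v := by
    intro i v
    rw [hJ i]
    simp [hsym' i, sub_eq_neg_add]
  rw [Fintype.linearIndependent_iff]
  intro g hg
  set w : EE n := ∑ i, g i • ζ i x with hw
  -- `w` is in the kernel of the 2-form `dα_H(x)`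
  have hker : ∀ v : EE n, Noether15.Dform H x v w - Noether15.Dform H x w v = 0 := by
    intro v
    have h1 : Noether15.Dform H x v w = ∑ i, g i * Noether15.Dform H x v (ζ i x) := by
      rw [hw, map_sum]
      simp [smul_eq_mul]
    have h2 : Noether15.Dform H x w v = ∑ i, g i * Noether15.Dform H x (ζ i x) v := by
      rw [hw]
      simp [ContinuousLinearMap.sum_apply, smul_eq_mul]
    have h3 := congrArg (fun f : EE n →L[ℝ] ℝ => f v) hg
    simp only [ContinuousLinearMap.sum_apply, ContinuousLinearMap.coe_smul',
      Pi.smul_apply, ContinuousLinearMap.zero_apply, smul_eq_mul] at h3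
    rw [h1, h2, ← Finset.sum_sub_distrib, ← h3]
    congr 1
    funext i
    rw [hJ' i v]
    ring
  -- component equations: `w = w.1 • Z_H(x)`
  have hq : ∀ j, w.2.1 j = w.1 * fderiv ℝ H x (0, 0, Pi.single j 1) := by
    intro j
    have h := hker (0, 0, Pi.single j 1)
    rw [Noether15.Dform_apply, Noether15.Dform_apply] at h
    simp [Pi.single_apply, ite_mul, mul_ite, Finset.sum_ite_eq'] at h
    linear_combination h
  have hp : ∀ j, w.2.2 j = - (w.1 * fderiv ℝ H x (0, Pi.single j 1, 0)) := by
    intro j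
    have h := hker (0, Pi.single j 1, 0)
    rw [Noether15.Dform_apply, Noether15.Dform_apply] at h
    simp [Pi.single_apply, ite_mul, mul_ite, Finset.sum_ite_eq'] at h
    linear_combination -h
  have hwZ : w = w.1 • ZH H x := by
    refine Prod.ext ?_ (Prod.ext ?_ ?_)
    · simp [ZH]
    · funext j
      simp [ZH, hq j, smul_eq_mul]
    · funext j
      simp [ZH, hp j, smul_eq_mul]
  -- apply linear independence of `Z_H(x), ζ₁(x), …, ζ_m(x)`
  rw [Fintype.linearIndependent_iff] at hindep
  have hzero : ∑ j : Fin (m + 1),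
      (Fin.cons (-w.1) g : Fin (m + 1) → ℝ) j •
        (Fin.cons (ZH H x) (fun i => ζ i x) : Fin (m + 1) → EE n) j = 0 := by
    rw [Fin.sum_univ_succ]
    simp only [Fin.cons_zero, Fin.cons_succ]
    rw [← hw]
    rw [hwZ]
    simp [ZH]
  intro i
  have := hindep (Fin.cons (-w.1) g) hzero i.succ
  simpa using this

end
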